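/- Let G be a finite abelian group, F a field with char F ∤ |G|, K = F(ω) where ω has multiplicative order exp(G), Γ = Gal(K/F), and χ a character of G over K. Let g_χ ∈ G be such that χ(g_χ) generates χ(G), let A_χ be the companion matrix over F of the minimal polynomial of χ(g_χ) over F, of size ℓ_χ = |Γ·χ(g_χ)|, and let ρ_χ : G → GL_{ℓ_χ}(F) be the lift of g_χ^j ker(χ) ↦ A_χ^j. Then after extending scalars to K, the representation (K^{ℓ_χ}, ρ_χ) is isomorphic to the direct sum ⊕_{ψ ∈ Γ·χ} (K, ψ) of the one-dimensional representations given by the characters in the Γ-orbit of χ. -/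

import Mathlib

open Polynomial

/-- The companion matrix of a (monic) polynomial `q`: ones on the subdiagonal,
minus the coefficients of `q` in the last column. -/
def companionMatrix {F : Type*} [Field F] (q : Polynomial F) :
    Matrix (Fin q.natDegree) (Fin q.natDegree) F :=
  Matrix.of fun i j =>
    (if (i : ℕ) = (j : ℕ) + 1 then 1 else 0) -
      (if (j : ℕ) = q.natDegree - 1 then q.coeff i else 0)

/-- The action of the Galois group on characters : `(γ · χ)(g) = γ(χ(g))`. -/
def galChar {F K G : Type*} [Field F] [Field K] [Algebra F K] [Group G]
    (γ : K ≃ₐ[F] K) (χ : G →* Kˣ) : G →* Kˣ :=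
  (Units.map (γ : K →* K)).comp χ

/-- Proposition on irreducible representations of a finite abelian group over a
non-closed field, part (i): after extending scalars from `F` to `K = F(ω)`, the
representation `ρ_χ` built from the companion matrix `A_χ` of the minimal polynomial of
`χ(g_χ)` becomes isomorphic to the direct sum of the one-dimensional representations
given by the characters in the Galois orbit of `χ`. -/
theorem companion_rep_extended_iso_sum_of_galois_orbit
    {G : Type*} [CommGroup G] [Fintype G]
    {F K : Type*} [Field F] [Field K] [Algebra F K]
    (hchar : (Fintype.card G : F) ≠ 0)
    (ω : K) (hω : orderOf ω = Monoid.exponent G)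
    (hK : IntermediateField.adjoin F {ω} = ⊤)
    (χ : G →* Kˣ) (gχ : G)
    (hgen : ∀ g : G, ∃ n : ℤ, χ g = χ gχ ^ n)
    (ρ : G →* Matrix (Fin (minpoly F ((χ gχ : Kˣ) : K)).natDegree)
        (Fin (minpoly F ((χ gχ : Kˣ) : K)).natDegree) F)
    (hρA : ρ gχ = companionMatrix (minpoly F ((χ gχ : Kˣ) : K)))
    (hρker : ∀ g ∈ χ.ker, ρ g = 1) :
    ∃ e : (Fin (minpoly F ((χ gχ : Kˣ) : K)).natDegree → K) ≃ₗ[K]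
        ({ψ : G →* Kˣ | ∃ γ : K ≃ₐ[F] K, ψ = galChar γ χ} → K),
      ∀ (g : G) (v : Fin (minpoly F ((χ gχ : Kˣ) : K)).natDegree → K),
        e (((ρ g).map (algebraMap F K)).mulVec v) =
          fun ψ => ((ψ : {ψ : G →* Kˣ | ∃ γ : K ≃ₐ[F] K, ψ = galChar γ χ}) : G →* Kˣ) g * e v ψ := by
  classical
  revert hρA hρker
  revert ρ
  set α : K := ((χ gχ : Kˣ) : K) with hα
  set q : Polynomial F := minpoly F α with hqdef
  set d : ℕ := q.natDegree with hd
  set S : Set (G →* Kˣ) := {ψ : G →* Kˣ | ∃ γ : K ≃ₐ[F] K, ψ = galChar γ χ} with hS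
  intro ρ hρA hρker
  set n : ℕ := Monoid.exponent G with hn
  have npos : 0 < n := Monoid.exponent_pos.2 Monoid.ExponentExists.of_finite
  have hnF : (n : F) ≠ 0 := by
    intro h0
    obtain ⟨c, hc⟩ := Group.exponent_dvd_card (G := G)
    apply hchar
    rw [hc]; push_cast; rw [h0, zero_mul]
  -- ω is a primitive n-th root of unity
  have hωn : ω ^ n = 1 := by rw [← hω]; exact pow_orderOf_eq_one ω
  have hprim : IsPrimitiveRoot ω n := hω ▸ IsPrimitiveRoot.orderOf ω
  have hωint : IsIntegral F ω :=
    ⟨X ^ n - C 1, monic_X_pow_sub_C 1 npos.ne', by simp [hωn]⟩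
  -- K is a cyclotomic extension of F, hence Galois
  have hadj : Algebra.adjoin F ({ω} : Set K) = ⊤ := by
    have h1 := IntermediateField.adjoin_simple_toSubalgebra_of_isAlgebraic hωint.isAlgebraic
    rw [hK, IntermediateField.top_toSubalgebra] at h1
    exact h1.symm
  haveI hcyc : IsCyclotomicExtension {n} F K := by
    rw [IsCyclotomicExtension.iff_adjoin_eq_top]
    refine ⟨fun m hm _ => ⟨ω, by rcases Set.mem_singleton_iff.1 hm with rfl; exact hprim⟩, ?_⟩
    rw [eq_top_iff, ← hadj]
    refine Algebra.adjoin_mono ?_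
    rintro x rfl
    exact ⟨n, rfl, npos.ne', hωn⟩
  haveI : NeZero ((n : ℕ) : F) := ⟨hnF⟩
  haveI hGal : IsGalois F K := IsCyclotomicExtension.isGalois {n} F K
  haveI : FiniteDimensional F K := IsCyclotomicExtension.finiteDimensional {n} F K
  -- facts about α = χ(gχ)
  have hαn : α ^ n = 1 := by
    have h1 : (χ gχ) ^ n = 1 := by rw [← map_pow, Monoid.pow_exponent_eq_one, map_one]
    have := congrArg (Units.val) h1
    simpa using this
  have hαint : IsIntegral F α :=
    ⟨X ^ n - C 1, monic_X_pow_sub_C 1 npos.ne', by simp [hαn]⟩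
  have hmono : q.Monic := minpoly.monic hαint
  have hdpos : 0 < d := minpoly.natDegree_pos hαint
  have hsep : q.Separable := by
    have h1 : q ∣ (X ^ n - 1 : F[X]) := minpoly.dvd F α (by simp [hαn])
    exact (Polynomial.X_pow_sub_one_separable_iff.2 hnF).of_dvd h1
  set qK : Polynomial K := q.map (algebraMap F K) with hqK
  have hqKmonic : qK.Monic := hmono.map _
  have hqKdeg : qK.natDegree = d := natDegree_map _
  have hsplits : Splits qK :=
    (Normal.splits inferInstance α)
  have hroots_card : Multiset.card qK.roots = d := by
    rw [splits_iff_card_roots.1 hsplits, hqKdeg]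
  have hnodup : qK.roots.Nodup := nodup_roots hsep.map
  -- the evaluation of each character in the orbit at gχ is a root of qK
  have hrootaux : ∀ β : K, aeval β q = 0 → β ∈ qK.roots := by
    intro β hev
    rw [mem_roots']
    refine ⟨hqKmonic.ne_zero, ?_⟩
    show eval β qK = 0
    rwa [eval_map, ← aeval_def]
  have hroot : ∀ ψ : S, ((ψ : G →* Kˣ) gχ : K) ∈ qK.roots := by
    rintro ⟨ψ, γ, rfl⟩
    apply hrootaux
    have h0 : aeval α q = 0 := minpoly.aeval F α
    have h1 := aeval_algHom_apply γ.toAlgHom α q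
    rw [h0, map_zero] at h1
    have h2 : aeval (γ α) q = 0 := by simpa using h1
    simpa [galChar] using h2
  -- the map ψ ↦ ψ(gχ) on the orbit
  set rK : S → K := fun ψ => ((ψ : G →* Kˣ) gχ : K) with hrK
  have hψpow : ∀ (ψ : S) (g : G) (m : ℕ), χ g = χ gχ ^ m →
      (ψ : G →* Kˣ) g = ((ψ : G →* Kˣ) gχ) ^ m := by
    rintro ⟨ψ, γ, rfl⟩ g m hm
    show galChar γ χ g = (galChar γ χ gχ) ^ m
    simp [galChar, hm]
  have hgm : ∀ g : G, ∃ m : ℕ, χ g = χ gχ ^ m := by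
    intro g
    obtain ⟨z, hz⟩ := hgen g
    have hford : IsOfFinOrder (χ gχ) := by
      refine isOfFinOrder_iff_pow_eq_one.2 ⟨n, npos, ?_⟩
      rw [← map_pow, Monoid.pow_exponent_eq_one, map_one]
    set t := orderOf (χ gχ) with ht
    have htpos : 0 < t := hford.orderOf_pos
    refine ⟨(z % (t : ℤ)).toNat, ?_⟩
    rw [hz, ← zpow_natCast, Int.toNat_of_nonneg (Int.emod_nonneg z (by exact_mod_cast htpos.ne'))]
    exact (zpow_mod_orderOf _ z).symm
  have hrinj : Function.Injective rK := by
    rintro ⟨ψ₁, hψ₁⟩ ⟨ψ₂, hψ₂⟩ h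
    have hu : ψ₁ gχ = ψ₂ gχ := Units.ext h
    refine Subtype.ext (MonoidHom.ext fun g => ?_)
    obtain ⟨m, hm⟩ := hgm g
    have e1 := hψpow ⟨ψ₁, hψ₁⟩ g m hm
    have e2 := hψpow ⟨ψ₂, hψ₂⟩ g m hm
    simp only at e1 e2
    rw [e1, e2, hu]
  have hrsurj : ∀ β ∈ qK.roots, ∃ ψ : S, rK ψ = β := by
    intro β hβ
    have hev : aeval β q = 0 := by
      rw [mem_roots'] at hβ
      have h3 : eval β qK = 0 := hβ.2
      rwa [eval_map, ← aeval_def] at h3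
    obtain ⟨γ, hγ⟩ := minpoly.exists_algEquiv_of_root' hαint.isAlgebraic hev
    refine ⟨⟨galChar γ χ, γ, rfl⟩, ?_⟩
    simpa [rK, galChar] using hγ
  -- the orbit has exactly d elements
  set rT : S → {x // x ∈ qK.roots.toFinset} :=
    fun ψ => ⟨rK ψ, Multiset.mem_toFinset.2 (hroot ψ)⟩ with hrT
  have hrTbij : Function.Bijective rT := by
    constructor
    · intro a b h
      exact hrinj (congrArg Subtype.val h)
    · rintro ⟨β, hβ⟩
      obtain ⟨ψ, hψ⟩ := hrsurj β (Multiset.mem_toFinset.1 hβ)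
      exact ⟨ψ, Subtype.ext hψ⟩
  haveI : Fintype S := Fintype.ofBijective (Equiv.ofBijective rT hrTbij).symm
    (Equiv.ofBijective rT hrTbij).symm.bijective
  have hcardS : Fintype.card S = d := by
    rw [Fintype.card_of_bijective hrTbij, Fintype.card_coe,
      Multiset.toFinset_card_of_nodup hnodup, hroots_card]
  obtain ⟨ι⟩ : Nonempty (Fin d ≃ S) := ⟨(Fintype.equivFinOfCardEq hcardS).symm⟩
  -- the Vandermonde matrix of the roots is invertible
  set x : Fin d → K := fun i => rK (ι i) with hx
  have hxinj : Function.Injective x := hrinj.comp ι.injective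
  set W : Matrix (Fin d) (Fin d) K := Matrix.vandermonde x with hW
  have hWdet : IsUnit W.det := (Matrix.det_vandermonde_ne_zero_iff.2 hxinj).isUnit
  letI hWinv : Invertible W := Matrix.invertibleOfIsUnitDet W hWdet
  set e : (Fin d → K) ≃ₗ[K] (S → K) :=
    (Matrix.toLinearEquiv' W hWinv).trans (LinearEquiv.funCongrLeft K K ι).symm with he
  have heval : ∀ (v : Fin d → K) (ψ : S), e v ψ = ∑ j : Fin d, rK ψ ^ (j : ℕ) * v j := by
    intro v ψ
    have h1 : e v ψ = (W.mulVec v) (ι.symm ψ) := by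
      simp only [he, LinearEquiv.trans_apply, LinearEquiv.funCongrLeft_symm,
        LinearEquiv.funCongrLeft_apply, LinearMap.funLeft_apply]
      exact congrFun (show ((W.toLinearEquiv' hWinv : Module.End K (Fin d → K)) v : Fin d → K)
        = W.mulVec v by rw [Matrix.toLinearEquiv'_apply, Matrix.toLin'_apply]) (ι.symm ψ)
    rw [h1]
    simp only [Matrix.mulVec, dotProduct, hW, Matrix.vandermonde, Matrix.of_apply]
    refine Finset.sum_congr rfl fun j _ => ?_
    simp [hx]
  -- the key eigenvector computation for the companion matrix
  set A : Matrix (Fin d) (Fin d) F := companionMatrix q with hA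
  set AK : Matrix (Fin d) (Fin d) K := A.map (algebraMap F K) with hAK
  have key : ∀ β : K, β ∈ qK.roots → ∀ v : Fin d → K,
      (∑ j : Fin d, β ^ (j : ℕ) * (AK.mulVec v) j) = β * ∑ j : Fin d, β ^ (j : ℕ) * v j := by
    intro β hβ v
    have hqβ : qK.eval β = 0 := by
      rw [mem_roots'] at hβ; exact hβ.2
    have hpow : β ^ d = -∑ i : Fin d, qK.coeff i * β ^ (i : ℕ) := by
      have h1 := eval_eq_sum_range (p := qK) β
      rw [hqβ, hqKdeg, Finset.sum_range_succ] at h1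
      have h2 : qK.coeff d = 1 := by
        have := hqKmonic.coeff_natDegree
        rwa [hqKdeg] at this
      rw [h2, one_mul] at h1
      rw [Fin.sum_univ_eq_sum_range (fun i => qK.coeff i * β ^ i) d]
      exact eq_neg_of_add_eq_zero_right h1.symm
    have hcol : ∀ i : Fin d, (∑ j : Fin d, β ^ (j : ℕ) * AK j i) = β ^ ((i : ℕ) + 1) := by
      intro i
      have hAKentry : ∀ j : Fin d, AK j i =
          (if (j : ℕ) = (i : ℕ) + 1 then 1 else 0) -
            (if (i : ℕ) = d - 1 then qK.coeff j else 0) := by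
        intro j
        simp only [hAK, Matrix.map_apply, hA, companionMatrix, Matrix.of_apply]
        rw [map_sub]
        congr 1
        · split <;> simp
        · split <;> simp [hqK, coeff_map]
      simp only [hAKentry, mul_sub]
      rw [Finset.sum_sub_distrib]
      by_cases hi : (i : ℕ) = d - 1
      · have hip : (i : ℕ) + 1 = d := by omega
        have hz : (∑ j : Fin d, β ^ (j : ℕ) * if (j : ℕ) = (i : ℕ) + 1 then 1 else 0) = 0 := by
          apply Finset.sum_eq_zero
          intro j _
          have : (j : ℕ) ≠ (i : ℕ) + 1 := by omega
          simp [this]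
        rw [hz, hip, hpow]
        simp only [hi, if_true]
        rw [zero_sub, neg_inj]
        congr 1
        ext j
        ring
      · have hip : (i : ℕ) + 1 < d := by omega
        have hz : (∑ j : Fin d, β ^ (j : ℕ) * if (j : ℕ) = (i : ℕ) + 1 then 1 else 0)
            = β ^ ((i : ℕ) + 1) := by
          rw [show (∑ j : Fin d, β ^ (j : ℕ) * if (j : ℕ) = (i : ℕ) + 1 then 1 else 0)
              = ∑ j : Fin d, (fun k : ℕ => if k = (i : ℕ) + 1 then β ^ k else 0) (j : ℕ) from
            Finset.sum_congr rfl fun j _ => by split <;> simp_all]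
          rw [Fin.sum_univ_eq_sum_range (fun k => if k = (i : ℕ) + 1 then β ^ k else 0) d]
          rw [Finset.sum_ite_eq' (Finset.range d) ((i : ℕ) + 1) (fun k => β ^ k)]
          simp [Finset.mem_range.2 hip]
        rw [hz]
        simp [hi]
    calc (∑ j : Fin d, β ^ (j : ℕ) * (AK.mulVec v) j)
        = ∑ j : Fin d, ∑ i : Fin d, β ^ (j : ℕ) * (AK j i * v i) := by
          simp [Matrix.mulVec, dotProduct, Finset.mul_sum]
      _ = ∑ i : Fin d, (∑ j : Fin d, β ^ (j : ℕ) * AK j i) * v i := by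
          rw [Finset.sum_comm]
          congr 1; ext i
          rw [Finset.sum_mul]
          congr 1; ext j
          ring
      _ = ∑ i : Fin d, β ^ ((i : ℕ) + 1) * v i := by simp only [hcol]
      _ = β * ∑ i : Fin d, β ^ (i : ℕ) * v i := by
          rw [Finset.mul_sum]
          congr 1; ext i
          rw [pow_succ]
          ring
  have keypow : ∀ (m : ℕ) (β : K), β ∈ qK.roots → ∀ v : Fin d → K,
      (∑ j : Fin d, β ^ (j : ℕ) * ((AK ^ m).mulVec v) j) = β ^ m * ∑ j : Fin d, β ^ (j : ℕ) * v j := by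
    intro m β hβ
    induction m with
    | zero => intro v; simp
    | succ m ih =>
      intro v
      rw [pow_succ']
      rw [← Matrix.mulVec_mulVec]
      rw [key β hβ, ih, pow_succ']
      ring
  -- decomposition of ρ g as a power of the companion matrix
  have hgA : ∀ g : G, ∃ m : ℕ, χ g = χ gχ ^ m ∧ ρ g = A ^ m := by
    intro g
    obtain ⟨m, hm⟩ := hgm g
    refine ⟨m, hm, ?_⟩
    have hk : g * (gχ ^ m)⁻¹ ∈ χ.ker := by
      rw [MonoidHom.mem_ker, map_mul, map_inv, map_pow, hm, mul_inv_cancel]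
    have h1 : ρ g = ρ (g * (gχ ^ m)⁻¹) * ρ (gχ ^ m) := by
      rw [← map_mul]; congr 1; group
    rw [h1, hρker _ hk, one_mul, map_pow, hρA]
  -- conclusion
  refine ⟨e, ?_⟩
  intro g v
  obtain ⟨m, hm1, hm2⟩ := hgA g
  funext ψ
  have hβ := hroot ψ
  have hmap : (ρ g).map (algebraMap F K) = AK ^ m := by
    rw [hm2, ← RingHom.mapMatrix_apply, map_pow, RingHom.mapMatrix_apply]
  rw [hmap, heval, heval, keypow m _ hβ v, hψpow ψ g m hm1]
  push_cast
  rfl
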